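/- Let A be a complete topological ring which is I-adically complete and separated for a finitely generated ideal I, over the valuation ring 𝒪_K of a non-archimedean field with pseudouniformizer ϖ ∈ I. If there is a continuous adic surjection 𝒪_K⟨x₁,…,x_n⟩⟦y₁,…,y_m⟧ → A, then for every ideal of definition J of A containing ϖA, the quotient A/J is a finitely generated 𝒪_K/ϖ-algebra. -/

import Mathlib

open MvPolynomial

open AdicCompletion Submodule in
lemma aux_ker_eval {R : Type*} [CommRing R] (I : Ideal R) {ι : Type*} [Fintype ι]
    (g : ι → R) (N : ℕ) (hspan : Ideal.span (Set.range g) = I ^ N)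
    (x : AdicCompletion I R) (hx : x.val N = 0) :
    x ∈ Ideal.map (algebraMap R (AdicCompletion I R)) (I ^ N) := by
  classical
  obtain ⟨s, rfl⟩ := AdicCompletion.mk_surjective I R x
  have hst : ∀ c : ℕ, (I ^ c • ⊤ : Ideal R) = I ^ c := fun c => by ext y; simp
  -- base case
  have hsN : s N ∈ I ^ N := by
    have : Submodule.mkQ (I ^ N • ⊤ : Submodule R R) (s N) = 0 := hx
    rw [Submodule.mkQ_apply, Submodule.Quotient.mk_eq_zero] at this
    rwa [hst N] at this
  have base : ∃ c : ι → R, ∑ i, c i • g i = s (N + 0) := by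
    rw [← hspan] at hsN
    simpa using (mem_span_range_iff_exists_fun R).mp hsN
  -- step
  have step : ∀ (j : ℕ) (c : ι → R), (∑ i, c i • g i = s (N + j)) →
      ∃ e : ι → R, (∀ i, e i ∈ I ^ j) ∧ ∑ i, (c i + e i) • g i = s (N + (j + 1)) := by
    intro j c hc
    have hd : s (N + (j + 1)) - s (N + j) ∈ I ^ j • Ideal.span (Set.range g) := by
      rw [hspan, smul_eq_mul, ← pow_add]
      have h1 := (s.property (show N + j ≤ N + (j + 1) by omega))
      have h2 := SModEq.sub_mem.mp h1.symm
      rw [hst] at h2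
      have h3 : I ^ (N + j) ≤ I ^ (j + N) := by rw [add_comm]
      exact h3 h2
    obtain ⟨a, ha, hsum⟩ := (Submodule.mem_ideal_smul_span_iff_exists_sum (I ^ j) g _).mp hd
    refine ⟨fun i => a i, fun i => ha i, ?_⟩
    have hfs : ∑ i, a i • g i = s (N + (j + 1)) - s (N + j) := by
      rw [← hsum]
      exact (Finsupp.sum_fintype a (fun i c => c • g i) (fun i => zero_smul _ _)).symm
    simp only [add_smul, Finset.sum_add_distrib, hc, hfs]
    ring
  -- recursive construction
  let F : ∀ j : ℕ, {c : ι → R // ∑ i, c i • g i = s (N + j)} :=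
    fun j => Nat.rec ⟨Classical.choose base, Classical.choose_spec base⟩
      (fun j p => ⟨fun i => p.1 i + Classical.choose (step j p.1 p.2) i,
        (Classical.choose_spec (step j p.1 p.2)).2⟩) j
  have hdiff : ∀ j i, (F (j + 1)).1 i - (F j).1 i ∈ I ^ j := by
    intro j i
    have h : (F (j + 1)).1 i = (F j).1 i + Classical.choose (step j (F j).1 (F j).2) i := rfl
    rw [h]
    simpa using (Classical.choose_spec (step j (F j).1 (F j).2)).1 i
  -- cauchy sequences
  let t : ι → AdicCauchySequence I R := fun i =>
    ⟨fun j => (F j).1 i, by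
      rw [isAdicCauchy_iff]
      intro j
      rw [SModEq.sub_mem, hst]
      exact neg_mem_iff.mp (by simpa using hdiff j i)⟩
  refine (show AdicCompletion.mk I R s = ∑ i, algebraMap R _ (g i) * AdicCompletion.mk I R (t i)
    from ?_) ▸ Ideal.sum_mem _ (fun i _ => Ideal.mul_mem_right _ _
      (Ideal.mem_map_of_mem _ (hspan ▸ Ideal.subset_span (Set.mem_range_self i))))
  apply Subtype.ext
  funext j
  have h2 : (∑ i, algebraMap R (AdicCompletion I R) (g i) * AdicCompletion.mk I R (t i)).val j
      = ∑ i, (algebraMap R (AdicCompletion I R) (g i) * AdicCompletion.mk I R (t i)).val j := by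
    have h3 := congrFun (map_sum (AdicCompletion.incl I R)
      (fun i => algebraMap R (AdicCompletion I R) (g i) * AdicCompletion.mk I R (t i))
      Finset.univ) j
    simpa using h3
  have hterm : ∀ i, (algebraMap R (AdicCompletion I R) (g i) * AdicCompletion.mk I R (t i)).val j
      = Ideal.Quotient.mk (I ^ j • ⊤ : Ideal R) (g i * (F j).1 i) := by
    intro i
    rw [AdicCompletion.val_mul, map_mul]
    rfl
  show Submodule.mkQ (I ^ j • ⊤ : Submodule R R) (s j) = _
  rw [h2]
  simp only [hterm, ← map_sum]
  have hFj : ∑ i, g i * (F j).1 i = s (N + j) := by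
    calc ∑ i, g i * (F j).1 i = ∑ i, (F j).1 i • g i := by
          refine Finset.sum_congr rfl fun i _ => ?_
          rw [smul_eq_mul, mul_comm]
      _ = s (N + j) := (F j).2
  rw [hFj]
  exact (AdicCauchySequence.mk_eq_mk (show j ≤ N + j by omega) s).symm


/-- Let `A` be a ring, `I`-adically complete and separated for a finitely generated ideal
`I`, over a valuation ring `𝒪_K` with pseudouniformizer `ϖ ∈ I`. If there is a continuous
adic surjection `𝒪_K⟨x₁,…,x_n⟩⟦y₁,…,y_m⟧ → A` (the source being the `(ϖ, y)`-adic
completion of the polynomial ring), then for every ideal of definition `J` of `A`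
containing `ϖA`, the quotient `A/J` is a finitely generated `𝒪_K/ϖ`-algebra. -/
theorem stmt_18 {O : Type*} [CommRing O] [IsDomain O] [ValuationRing O]
    (ϖ : O) (hϖ0 : ϖ ≠ 0) (hϖ : ϖ ∈ IsLocalRing.maximalIdeal O)
    (n m : ℕ)
    -- `IP` is the ideal `(ϖ, y₁, …, y_m)` of the polynomial ring
    (IP : Ideal (MvPolynomial (Fin n ⊕ Fin m) O))
    (hIP : IP = Ideal.span
      ({C ϖ} ∪ Set.range fun j : Fin m => (X (Sum.inr j) : MvPolynomial (Fin n ⊕ Fin m) O)))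
    {A : Type*} [CommRing A] [Algebra O A]
    (I : Ideal A) (hIfg : I.FG) [IsAdicComplete I A]
    -- a surjection from the `(ϖ, y)`-adic completion of the polynomial ring
    (ψ : AdicCompletion IP (MvPolynomial (Fin n ⊕ Fin m) O) →+* A)
    (hψsurj : Function.Surjective ψ)
    (hψO : ∀ c : O, ψ (algebraMap (MvPolynomial (Fin n ⊕ Fin m) O)
      (AdicCompletion IP (MvPolynomial (Fin n ⊕ Fin m) O)) (C c)) = algebraMap O A c)
    -- `ψ` is adic: the image of `IP` generates an ideal of definition of `A`
    (hadic : (∃ k : ℕ, I ^ k ≤ Ideal.map ψ (IP.map (algebraMap _ _))) ∧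
      ∃ l : ℕ, (Ideal.map ψ (IP.map (algebraMap _ _))) ^ l ≤ I)
    -- `J` is an ideal of definition of `A` containing `ϖ A`
    (J : Ideal A) (hJ1 : ∃ k : ℕ, I ^ k ≤ J) (hJ2 : ∃ l : ℕ, J ^ l ≤ I)
    (hϖJ : algebraMap O A ϖ ∈ J) :
    Algebra.FiniteType O (A ⧸ J) := by
  classical
  obtain ⟨l, hl⟩ := hadic.2
  obtain ⟨k, hk⟩ := hJ1
  set P := MvPolynomial (Fin n ⊕ Fin m) O
  set Phat := AdicCompletion IP P
  set K : Ideal A := Ideal.map ψ (IP.map (algebraMap P Phat)) with hK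
  set N := l * k with hN
  have hKJ : K ^ N ≤ J := by
    rw [hN, pow_mul]
    exact le_trans (Ideal.pow_right_mono hl k) hk
  -- `IP` is finitely generated
  have hfin : ({C ϖ} ∪ Set.range fun j : Fin m =>
      (X (Sum.inr j) : P) : Set P).Finite :=
    (Set.finite_singleton _).union (Set.finite_range _)
  have hIPfg : IP.FG := ⟨hfin.toFinset, by rw [hfin.coe_toFinset, hIP]⟩
  obtain ⟨T, hT⟩ := Submodule.FG.pow hIPfg N
  have hgspan : Ideal.span (Set.range (fun p : {x // x ∈ T} => (p : P))) = IP ^ N := by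
    rw [Subtype.range_coe_subtype]
    simpa using hT
  -- the polynomial ring surjects onto `A ⧸ J`
  have key : ∀ x : Phat, ∃ p : P,
      Ideal.Quotient.mk J (ψ x) = Ideal.Quotient.mk J (ψ (algebraMap P Phat p)) := by
    intro x
    obtain ⟨s, rfl⟩ := AdicCompletion.mk_surjective IP P x
    refine ⟨s N, ?_⟩
    have hx0 : (AdicCompletion.mk IP P s - algebraMap P Phat (s N)).val N = 0 := by
      show Submodule.mkQ _ (s N) - (algebraMap P Phat (s N)).val N = 0
      have : (algebraMap P Phat (s N)).val N = Submodule.mkQ (IP ^ N • ⊤ : Submodule P P) (s N) :=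
        rfl
      rw [this, sub_self]
    have hmem := aux_ker_eval IP (fun p : {x // x ∈ T} => (p : P)) N hgspan _ hx0
    have hψmem : ψ (AdicCompletion.mk IP P s - algebraMap P Phat (s N)) ∈ J := by
      have h1 : ψ (AdicCompletion.mk IP P s - algebraMap P Phat (s N)) ∈
          Ideal.map ψ (Ideal.map (algebraMap P Phat) (IP ^ N)) := Ideal.mem_map_of_mem ψ hmem
      rw [Ideal.map_map, Ideal.map_pow, ← Ideal.map_map, ← hK] at h1
      exact hKJ h1
    rw [Ideal.Quotient.eq, ← map_sub]
    exact hψmem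
  -- assemble the algebra hom
  let φ : P →ₐ[O] A ⧸ J :=
    { toRingHom := ((Ideal.Quotient.mk J).comp (ψ.comp (algebraMap P Phat : P →+* Phat)))
      commutes' := fun c => by
        show Ideal.Quotient.mk J (ψ (algebraMap P Phat (algebraMap O P c))) = _
        rw [show (algebraMap O P c : P) = C c from rfl, hψO c]
        rfl }
  have hφsurj : Function.Surjective φ := by
    intro a
    obtain ⟨b, rfl⟩ := Ideal.Quotient.mk_surjective a
    obtain ⟨x, rfl⟩ := hψsurj b
    obtain ⟨p, hp⟩ := key x
    exact ⟨p, hp.symm⟩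
  exact Algebra.FiniteType.of_surjective φ hφsurj
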